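/- Let M be a non-degenerate Orlicz function. Then the Orlicz sequence space h_M does not embed isomorphically into c₀. -/

import Mathlib

open scoped ZeroAtInfty

/-- Membership in the Orlicz sequence space `h_M`. -/
def memHM (M : ℝ → ℝ) (a : ℕ → ℝ) : Prop :=
  ∀ c > (0 : ℝ), Summable fun i => M (c * |a i|)

/-- The `h_M` (Luxemburg) norm of a sequence. -/
noncomputable def hMNorm (M : ℝ → ℝ) (a : ℕ → ℝ) : ℝ :=
  sInf {ρ : ℝ | 0 < ρ ∧ ∑' i, M (|a i| / ρ) ≤ 1}

section Aux

variable {M : ℝ → ℝ}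

lemma orlicz_nonneg (h0 : M 0 = 0) (hpos : ∀ u > 0, M u > 0) {t : ℝ} (ht : 0 ≤ t) :
    0 ≤ M t := by
  rcases eq_or_lt_of_le ht with h | h
  · simp [← h, h0]
  · exact (hpos t h).le

lemma orlicz_scale (hconv : ConvexOn ℝ (Set.Ici 0) M) (h0 : M 0 = 0)
    {t u : ℝ} (ht : 0 ≤ t) (htu : t ≤ u) (hu : 0 < u) : M t ≤ t / u * M u := by
  have hb : 0 ≤ t / u := div_nonneg ht hu.le
  have hb1 : t / u ≤ 1 := (div_le_one hu).2 htu
  have ha : 0 ≤ 1 - t / u := by linarith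
  have hkey := hconv.2 (Set.self_mem_Ici) (Set.mem_Ici.2 hu.le) ha hb (by ring)
  have he : (1 - t / u) • (0 : ℝ) + (t / u) • u = t := by
    simp only [smul_eq_mul, mul_zero, zero_add]
    field_simp
  rw [he] at hkey
  simpa [h0] using hkey

lemma memHM_of_support (h0 : M 0 = 0) (s : Finset ℕ) {y : ℕ → ℝ}
    (hy : ∀ i ∉ s, y i = 0) : memHM M y := by
  intro c _
  apply summable_of_ne_finset_zero (s := s)
  intro i hi
  simp [hy i hi, h0]

lemma tsum_modular (h0 : M 0 = 0) (s : Finset ℕ) {y : ℕ → ℝ}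
    (hy : ∀ i ∉ s, y i = 0) (ρ : ℝ) :
    ∑' i, M (|y i| / ρ) = ∑ i ∈ s, M (|y i| / ρ) := by
  apply tsum_eq_sum
  intro i hi
  simp [hy i hi, h0]

lemma hMNorm_le (h0 : M 0 = 0) (s : Finset ℕ) {y : ℕ → ℝ}
    (hy : ∀ i ∉ s, y i = 0) {ρ : ℝ} (hρ : 0 < ρ)
    (h : ∑ i ∈ s, M (|y i| / ρ) ≤ 1) : hMNorm M y ≤ ρ := by
  apply csInf_le ⟨0, fun ρ' hρ' => hρ'.1.le⟩
  exact ⟨hρ, by rw [tsum_modular h0 s hy]; exact h⟩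

lemma le_hMNorm (hconv : ConvexOn ℝ (Set.Ici 0) M) (hmono : MonotoneOn M (Set.Ici 0))
    (h0 : M 0 = 0) (hpos : ∀ u > 0, M u > 0) (s : Finset ℕ) {y : ℕ → ℝ}
    (hy : ∀ i ∉ s, y i = 0) {ρ : ℝ} (hρ : 0 < ρ)
    (h : 1 < ∑ i ∈ s, M (|y i| / ρ)) : ρ ≤ hMNorm M y := by
  classical
  set A : ℝ := 1 + ∑ i ∈ s, |y i| with hA
  have hsum0 : 0 ≤ ∑ i ∈ s, |y i| := Finset.sum_nonneg fun i _ => abs_nonneg _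
  have hApos : 0 < A := by rw [hA]; linarith
  have hyA : ∀ i, |y i| ≤ A := by
    intro i
    by_cases hi : i ∈ s
    · have := Finset.single_le_sum (f := fun i => |y i|) (fun j _ => abs_nonneg _) hi
      rw [hA]; linarith
    · simp [hy i hi]; linarith
  have hMA : 0 < M A := hpos A hApos
  set ρ₂ : ℝ := max 1 ((s.card : ℝ) * M A + 1) with hρ₂
  have hρ₂1 : (1 : ℝ) ≤ ρ₂ := le_max_left _ _
  have hρ₂pos : 0 < ρ₂ := lt_of_lt_of_le one_pos hρ₂1
  have hρ₂card : (s.card : ℝ) * M A + 1 ≤ ρ₂ := le_max_right _ _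
  have hmem : ρ₂ ∈ {ρ : ℝ | 0 < ρ ∧ ∑' i, M (|y i| / ρ) ≤ 1} := by
    refine ⟨hρ₂pos, ?_⟩
    rw [tsum_modular h0 s hy]
    have hbound : ∀ i ∈ s, M (|y i| / ρ₂) ≤ M A / ρ₂ := by
      intro i _
      have h1 : M (|y i| / ρ₂) ≤ (|y i| / ρ₂) / A * M A := by
        apply orlicz_scale hconv h0 (by positivity) ?_ hApos
        calc |y i| / ρ₂ ≤ |y i| := div_le_self (abs_nonneg _) hρ₂1
          _ ≤ A := hyA i
      have h2 : |y i| / ρ₂ / A * M A ≤ M A / ρ₂ := by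
        rw [div_div, div_mul_eq_mul_div, div_le_div_iff₀ (by positivity) hρ₂pos]
        nlinarith [mul_nonneg (mul_nonneg (sub_nonneg.2 (hyA i)) hMA.le) hρ₂pos.le]
      linarith
    calc ∑ i ∈ s, M (|y i| / ρ₂) ≤ ∑ _i ∈ s, M A / ρ₂ := Finset.sum_le_sum hbound
      _ = (s.card : ℝ) * (M A / ρ₂) := by rw [Finset.sum_const, nsmul_eq_mul]
      _ ≤ 1 := by
          rw [mul_div_assoc', div_le_one hρ₂pos]
          linarith
  apply le_csInf ⟨ρ₂, hmem⟩
  rintro ρ' ⟨hρ'pos, hρ'le⟩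
  by_contra hlt
  push_neg at hlt
  have hcomp : ∑ i ∈ s, M (|y i| / ρ) ≤ ∑ i ∈ s, M (|y i| / ρ') := by
    apply Finset.sum_le_sum
    intro i _
    apply hmono (Set.mem_Ici.2 (by positivity)) (Set.mem_Ici.2 (by positivity))
    gcongr
  rw [tsum_modular h0 s hy] at hρ'le
  linarith

end Aux

/-- For a non-degenerate Orlicz function `M`, the space `h_M` does not embed
isomorphically into `c₀`: there is no map `T` from `h_M` to `c₀`, linear on `h_M`,
with `a·‖x‖_{h_M} ≤ ‖T x‖ ≤ b·‖x‖_{h_M}`. -/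
theorem stmt13 (M : ℝ → ℝ)
    (hconv : ConvexOn ℝ (Set.Ici 0) M) (hmono : MonotoneOn M (Set.Ici 0))
    (h0 : M 0 = 0) (hpos : ∀ u > 0, M u > 0) :
    ¬ ∃ (T : (ℕ → ℝ) → C₀(ℕ, ℝ)) (a b : ℝ), 0 < a ∧ 0 < b ∧
        (∀ x y : ℕ → ℝ, memHM M x → memHM M y → T (x + y) = T x + T y) ∧
        (∀ (c : ℝ) (x : ℕ → ℝ), memHM M x → T (c • x) = c • T x) ∧
        (∀ x : ℕ → ℝ, memHM M x →
          a * hMNorm M x ≤ ‖T x‖ ∧ ‖T x‖ ≤ b * hMNorm M x) := by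
  classical
  rintro ⟨T, a, b, ha, hb, hadd, hsmul, hbd⟩
  have hM1 : 0 < M 1 := hpos 1 one_pos
  set lam : ℝ := max 1 (2 * M 1) with hlamdef
  have hlam1 : (1 : ℝ) ≤ lam := le_max_left _ _
  have hlampos : 0 < lam := lt_of_lt_of_le one_pos hlam1
  have hMlam : M (1 / lam) ≤ 1 / 2 := by
    have h1 : M (1 / lam) ≤ (1 / lam) / 1 * M 1 :=
      orlicz_scale hconv h0 (by positivity) (by rw [div_le_one hlampos]; exact hlam1) one_pos
    have h2 : 2 * M 1 ≤ lam := le_max_right _ _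
    rw [div_one] at h1
    rw [div_mul_eq_mul_div, one_mul] at h1
    calc M (1 / lam) ≤ M 1 / lam := h1
      _ ≤ 1 / 2 := by
          rw [div_le_div_iff₀ hlampos two_pos]; linarith
  -- unit basis vectors
  set E : ℕ → (ℕ → ℝ) := fun n i => if i = n then (1 : ℝ) else 0 with hE
  have hEsupp : ∀ n, ∀ i ∉ ({n} : Finset ℕ), E n i = 0 := by
    intro n i hi
    simp only [Finset.mem_singleton] at hi
    simp [hE, hi]
  have hEmem : ∀ n, memHM M (E n) := fun n => memHM_of_support h0 {n} (hEsupp n)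
  have hEnorm : ∀ n, hMNorm M (E n) ≤ lam := by
    intro n
    apply hMNorm_le h0 {n} (hEsupp n) hlampos
    have hEnn : E n n = 1 := by simp [hE]
    rw [Finset.sum_singleton, hEnn, abs_one]
    linarith
  set B : ℝ := b * lam with hBdef
  have hBpos : 0 < B := mul_pos hb hlampos
  have hTE : ∀ n i, |(T (E n)) i| ≤ B := by
    intro n i
    have h1 : ‖T (E n)‖ ≤ b * hMNorm M (E n) := (hbd _ (hEmem n)).2
    have h2 : |(T (E n)) i| ≤ ‖T (E n)‖ := by
      have := (T (E n)).toBCF.norm_coe_le_norm i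
      simpa [Real.norm_eq_abs] using this
    calc |(T (E n)) i| ≤ b * hMNorm M (E n) := le_trans h2 h1
      _ ≤ b * lam := mul_le_mul_of_nonneg_left (hEnorm n) hb.le
  -- compactness: coordinatewise convergent subsequence of (T (E n))
  set W : ℕ → (ℕ → ℝ) := fun n i => (T (E n)) i with hW
  have hK : IsCompact (Set.pi Set.univ fun _ : ℕ => Set.Icc (-B) B) :=
    isCompact_univ_pi fun _ => isCompact_Icc
  have hWmem : ∀ n, W n ∈ Set.pi Set.univ fun _ : ℕ => Set.Icc (-B) B := by
    intro n i _
    exact Set.mem_Icc.2 (abs_le.1 (hTE n i))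
  obtain ⟨x0, -, φ, hφ, hφconv⟩ := hK.tendsto_subseq hWmem
  have hcoord : ∀ i, Filter.Tendsto (fun k => W (φ k) i) Filter.atTop (nhds (x0 i)) := by
    intro i
    rw [tendsto_pi_nhds] at hφconv
    exact hφconv i
  -- the difference vectors
  set u : ℕ → (ℕ → ℝ) := fun k => E (φ (2 * k + 1)) + (-1 : ℝ) • E (φ (2 * k)) with hu
  have husupp : ∀ k, ∀ i ∉ ({φ (2 * k + 1), φ (2 * k)} : Finset ℕ), u k i = 0 := by
    intro k i hi
    simp only [Finset.mem_insert, Finset.mem_singleton] at hi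
    push_neg at hi
    simp [hu, hE, hi.1, hi.2]
  have humem : ∀ k, memHM M (u k) := fun k => memHM_of_support h0 _ (husupp k)
  have hTu : ∀ k, T (u k) = T (E (φ (2 * k + 1))) + (-1 : ℝ) • T (E (φ (2 * k))) := by
    intro k
    have hsm : memHM M ((-1 : ℝ) • E (φ (2 * k))) := by
      apply memHM_of_support h0 {φ (2 * k)}
      intro i hi
      simp [hEsupp _ i hi]
    rw [hu]
    rw [hadd _ _ (hEmem _) hsm, hsmul _ _ (hEmem _)]
  have hdcoord : ∀ i, Filter.Tendsto (fun k => (T (u k)) i) Filter.atTop (nhds 0) := by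
    intro i
    have hm1 : Filter.Tendsto (fun k : ℕ => 2 * k + 1) Filter.atTop Filter.atTop :=
      Filter.tendsto_atTop_atTop_of_monotone (fun x y h => by omega) fun n => ⟨n, by omega⟩
    have hm2 : Filter.Tendsto (fun k : ℕ => 2 * k) Filter.atTop Filter.atTop :=
      Filter.tendsto_atTop_atTop_of_monotone (fun x y h => by omega) fun n => ⟨n, by omega⟩
    have h1 : Filter.Tendsto (fun k => W (φ (2 * k + 1)) i) Filter.atTop (nhds (x0 i)) :=
      (hcoord i).comp hm1
    have h2 : Filter.Tendsto (fun k => W (φ (2 * k)) i) Filter.atTop (nhds (x0 i)) :=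
      (hcoord i).comp hm2
    have h3 := h1.sub h2
    rw [sub_self] at h3
    apply h3.congr
    intro k
    rw [hTu k]
    simp [hW, sub_eq_add_neg]
  have hunorm : ∀ k, hMNorm M (u k) ≤ lam := by
    intro k
    have hne : φ (2 * k + 1) ≠ φ (2 * k) := hφ.injective.ne (by omega)
    apply hMNorm_le h0 {φ (2 * k + 1), φ (2 * k)} (husupp k) hlampos
    rw [Finset.sum_insert (by simp [hne]), Finset.sum_singleton]
    have e1 : u k (φ (2 * k + 1)) = 1 := by simp [hu, hE, hne]
    have e2 : u k (φ (2 * k)) = -1 := by simp [hu, hE, hne.symm]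
    rw [e1, e2]
    simp only [abs_one, abs_neg]
    linarith
  have hTuB : ∀ k i, |(T (u k)) i| ≤ B := by
    intro k i
    have h1 : ‖T (u k)‖ ≤ b * hMNorm M (u k) := (hbd _ (humem k)).2
    have h2 : |(T (u k)) i| ≤ ‖T (u k)‖ := by
      have := (T (u k)).toBCF.norm_coe_le_norm i
      simpa [Real.norm_eq_abs] using this
    calc |(T (u k)) i| ≤ b * hMNorm M (u k) := le_trans h2 h1
      _ ≤ b * lam := mul_le_mul_of_nonneg_left (hunorm k) hb.le
  -- eventual smallness at 0
  have habs : ∀ ε : ℝ, 0 < ε → ∀ᶠ y in nhds (0 : ℝ), |y| ≤ ε := by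
    intro ε hε
    filter_upwards [Metric.closedBall_mem_nhds (0 : ℝ) hε] with y hy
    simpa [Real.dist_eq] using hy
  -- finite "bad" sets from zero at infinity
  have hbad : ∀ (k : ℕ) (ε : ℝ), ∃ s : Finset ℕ, 0 < ε → ∀ i ∉ s, |(T (u k)) i| ≤ ε := by
    intro k ε
    by_cases hε : 0 < ε
    · have hz : Filter.Tendsto (fun i => (T (u k)) i) Filter.cofinite (nhds 0) := by
        have := zero_at_infty (T (u k))
        rwa [Filter.cocompact_eq_cofinite] at this
      have hev : ∀ᶠ i in Filter.cofinite, |(T (u k)) i| ≤ ε := hz.eventually (habs ε hε)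
      rw [Filter.eventually_cofinite] at hev
      refine ⟨hev.toFinset, fun _ i hi => ?_⟩
      by_contra hcon
      exact hi ((Set.Finite.mem_toFinset hev).2 hcon)
    · exact ⟨∅, fun h => absurd h hε⟩
  choose bs hbs using hbad
  -- step function for the gliding hump
  have hstep : ∀ (l : ℕ) (s : Finset ℕ) (ε : ℝ),
      ∃ k, l < k ∧ (0 < ε → ∀ i ∈ s, |(T (u k)) i| ≤ ε) := by
    intro l s ε
    by_cases hε : 0 < ε
    · have hev : ∀ᶠ k in Filter.atTop, ∀ i ∈ s, |(T (u k)) i| ≤ ε := by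
        rw [Filter.eventually_all_finset]
        intro i _
        exact (hdcoord i).eventually (habs ε hε)
      obtain ⟨k, hk1, hk2⟩ := ((Filter.eventually_gt_atTop l).and hev).exists
      exact ⟨k, hk1, fun _ => hk2⟩
    · exact ⟨l + 1, by omega, fun h => absurd h hε⟩
  choose nxt hnxt1 hnxt2 using hstep
  -- recursive construction
  set g : ℕ → ℕ × Finset ℕ := fun m =>
    Nat.rec ((0 : ℕ), bs 0 1)
      (fun m p => (nxt p.1 p.2 ((1 / 2 : ℝ) ^ (m + 1)),
        p.2 ∪ bs (nxt p.1 p.2 ((1 / 2 : ℝ) ^ (m + 1))) ((1 / 2 : ℝ) ^ (m + 1)))) m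
    with hg
  set j : ℕ → ℕ := fun m => (g m).1 with hj
  set F : ℕ → Finset ℕ := fun m => (g m).2 with hF
  have hgsucc : ∀ m, g (m + 1) = (nxt (j m) (F m) ((1 / 2 : ℝ) ^ (m + 1)),
      F m ∪ bs (nxt (j m) (F m) ((1 / 2 : ℝ) ^ (m + 1))) ((1 / 2 : ℝ) ^ (m + 1))) :=
    fun m => rfl
  have hjsucc : ∀ m, j m < j (m + 1) := by
    intro m
    have h := hnxt1 (j m) (F m) ((1 / 2 : ℝ) ^ (m + 1))
    have : j (m + 1) = nxt (j m) (F m) ((1 / 2 : ℝ) ^ (m + 1)) := rfl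
    rw [this]; exact h
  have hjmono : StrictMono j := strictMono_nat_of_lt_succ hjsucc
  have hFsub : ∀ m, F m ⊆ F (m + 1) := by
    intro m
    have : F (m + 1) = F m ∪ bs (nxt (j m) (F m) ((1 / 2 : ℝ) ^ (m + 1))) ((1 / 2 : ℝ) ^ (m + 1)) := rfl
    rw [this]
    exact Finset.subset_union_left
  have hFmono : Monotone F := monotone_nat_of_le_succ hFsub
  have hinv3 : ∀ m, ∀ i ∉ F m, |(T (u (j m))) i| ≤ (1 / 2 : ℝ) ^ m := by
    intro m
    match m with
    | 0 =>
      intro i hi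
      have hF0 : F 0 = bs 0 1 := rfl
      have hj0 : j 0 = 0 := rfl
      rw [hF0] at hi
      have := hbs 0 1 one_pos i hi
      rw [hj0]
      simpa using this
    | m + 1 =>
      intro i hi
      have hFe : F (m + 1) = F m ∪ bs (nxt (j m) (F m) ((1 / 2 : ℝ) ^ (m + 1))) ((1 / 2 : ℝ) ^ (m + 1)) := rfl
      have hje : j (m + 1) = nxt (j m) (F m) ((1 / 2 : ℝ) ^ (m + 1)) := rfl
      rw [hFe, Finset.mem_union] at hi
      push_neg at hi
      rw [hje]
      exact hbs _ _ (by positivity) i hi.2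
  have hinv4 : ∀ m, ∀ i ∈ F m, |(T (u (j (m + 1)))) i| ≤ (1 / 2 : ℝ) ^ (m + 1) := by
    intro m i hi
    have hje : j (m + 1) = nxt (j m) (F m) ((1 / 2 : ℝ) ^ (m + 1)) := rfl
    rw [hje]
    exact hnxt2 (j m) (F m) ((1 / 2 : ℝ) ^ (m + 1)) (by positivity) i hi
  -- key coordinatewise bound
  have hgeo : ∀ s : Finset ℕ, ∑ m ∈ s, ((1 : ℝ) / 2) ^ m ≤ 2 := by
    intro s
    have hsummable : Summable fun m : ℕ => ((1 : ℝ) / 2) ^ m :=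
      summable_geometric_of_lt_one (by norm_num) (by norm_num)
    calc ∑ m ∈ s, ((1 : ℝ) / 2) ^ m ≤ ∑' m : ℕ, ((1 : ℝ) / 2) ^ m :=
          Summable.sum_le_tsum s (fun m _ => by positivity) hsummable
      _ = 2 := by
          rw [tsum_geometric_of_lt_one (by norm_num) (by norm_num)]; norm_num
  have hclaim : ∀ (i : ℕ) (J : ℕ),
      ∑ m ∈ Finset.range J, |(T (u (j m))) i| ≤ B + 2 := by
    intro i J
    by_cases hA : ∃ m, i ∈ F m
    · set m₀ : ℕ := Nat.find hA with hm₀def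
      have hm₀F : i ∈ F m₀ := Nat.find_spec hA
      have hm₀min : ∀ m < m₀, i ∉ F m := fun m hm => Nat.find_min hA hm
      have hrest : ∀ m ∈ (Finset.range J).erase m₀, |(T (u (j m))) i| ≤ (1 / 2 : ℝ) ^ m := by
        intro m hm
        rcases lt_or_gt_of_ne (Finset.ne_of_mem_erase hm) with hlt | hgt
        · exact hinv3 m i (hm₀min m hlt)
        · obtain ⟨m', rfl⟩ : ∃ m', m = m' + 1 := ⟨m - 1, by omega⟩
          exact hinv4 m' i (hFmono (by omega) hm₀F)
      by_cases hm₀mem : m₀ ∈ Finset.range J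
      · calc ∑ m ∈ Finset.range J, |(T (u (j m))) i|
            = |(T (u (j m₀))) i| + ∑ m ∈ (Finset.range J).erase m₀, |(T (u (j m))) i| :=
              (Finset.add_sum_erase _ _ hm₀mem).symm
          _ ≤ B + ∑ m ∈ (Finset.range J).erase m₀, ((1 : ℝ) / 2) ^ m := by
              gcongr with m hm
              · exact hTuB _ _
              · exact hrest m hm
          _ ≤ B + 2 := by
              have := hgeo ((Finset.range J).erase m₀)
              linarith
      · calc ∑ m ∈ Finset.range J, |(T (u (j m))) i|
            ≤ ∑ m ∈ Finset.range J, ((1 : ℝ) / 2) ^ m := by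
              apply Finset.sum_le_sum
              intro m hm
              exact hrest m (Finset.mem_erase.2 ⟨fun h => hm₀mem (h ▸ hm), hm⟩)
          _ ≤ 2 := hgeo _
          _ ≤ B + 2 := by linarith
    · push_neg at hA
      calc ∑ m ∈ Finset.range J, |(T (u (j m))) i|
          ≤ ∑ m ∈ Finset.range J, ((1 : ℝ) / 2) ^ m :=
            Finset.sum_le_sum fun m _ => hinv3 m i (hA m)
        _ ≤ 2 := hgeo _
        _ ≤ B + 2 := by linarith
  -- the contradiction
  set C : ℝ := (B + 2) / a with hC
  have hCpos : 0 < C := div_pos (by linarith) ha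
  have hC1pos : 0 < C + 1 := by linarith
  have hMC : 0 < M (1 / (C + 1)) := hpos _ (by positivity)
  obtain ⟨J, hJ⟩ := exists_nat_gt (1 / M (1 / (C + 1)))
  have hJM : 1 < (J : ℝ) * M (1 / (C + 1)) := by
    rw [div_lt_iff₀ hMC] at hJ
    linarith
  -- partial sums
  set S : ℕ → (ℕ → ℝ) := fun N i => ∑ m ∈ Finset.range N, u (j m) i with hS
  have hSsupp : ∀ N, ∀ i ∉ ((Finset.range N).image (fun m => φ (2 * j m + 1)) ∪
      (Finset.range N).image fun m => φ (2 * j m)), S N i = 0 := by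
    intro N i hi
    show ∑ m ∈ Finset.range N, u (j m) i = 0
    apply Finset.sum_eq_zero
    intro m hm
    apply husupp (j m)
    simp only [Finset.mem_insert, Finset.mem_singleton]
    push_neg
    constructor
    · intro hcon
      exact hi (Finset.mem_union_left _ (Finset.mem_image.2 ⟨m, hm, hcon.symm⟩))
    · intro hcon
      exact hi (Finset.mem_union_right _ (Finset.mem_image.2 ⟨m, hm, hcon.symm⟩))
  have hSmem : ∀ N, memHM M (S N) := fun N => memHM_of_support h0 _ (hSsupp N)
  have hT0 : T 0 = 0 := by
    have h := hsmul 0 0 (hSmem 0)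
    simpa using h
  have hTsum : ∀ N, T (S N) = ∑ m ∈ Finset.range N, T (u (j m)) := by
    intro N
    induction N with
    | zero =>
      have : S 0 = 0 := by funext i; simp [hS]
      rw [this, hT0]
      simp
    | succ N ih =>
      have heq : S (N + 1) = S N + u (j N) := by
        funext i
        simp [hS, Finset.sum_range_succ]
      rw [heq, hadd _ _ (hSmem N) (humem (j N)), ih, Finset.sum_range_succ]
  -- value of S J at the "p" points
  have hval : ∀ m₀ ∈ Finset.range J, S J (φ (2 * j m₀ + 1)) = 1 := by
    intro m₀ hm₀
    show ∑ m ∈ Finset.range J, u (j m) (φ (2 * j m₀ + 1)) = 1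
    rw [Finset.sum_eq_single m₀]
    · have hne : φ (2 * j m₀ + 1) ≠ φ (2 * j m₀) := hφ.injective.ne (by omega)
      simp [hu, hE, hne]
    · intro m hm hmne
      apply husupp (j m)
      simp only [Finset.mem_insert, Finset.mem_singleton]
      push_neg
      constructor
      · intro hcon
        have h1 := hφ.injective hcon
        have h2 : j m₀ = j m := by omega
        exact hmne (hjmono.injective h2.symm) |>.elim
      · intro hcon
        have := hφ.injective hcon
        omega
    · intro hcon
      exact absurd hm₀ hcon
  set sp : Finset ℕ := (Finset.range J).image (fun m => φ (2 * j m + 1)) with hsp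
  set sq : Finset ℕ := (Finset.range J).image (fun m => φ (2 * j m)) with hsq
  have hsum_sp : ∑ i ∈ sp, M (|S J i| / (C + 1)) = (J : ℝ) * M (1 / (C + 1)) := by
    rw [hsp, Finset.sum_image]
    · rw [Finset.sum_congr rfl fun m hm => by rw [hval m hm, abs_one]]
      rw [Finset.sum_const, Finset.card_range, nsmul_eq_mul]
    · intro m₁ h₁ m₂ h₂ hcon
      have h1 := hφ.injective hcon
      have h2 : j m₁ = j m₂ := by omega
      exact hjmono.injective h2
  have hmain : 1 < ∑ i ∈ sp ∪ sq, M (|S J i| / (C + 1)) := by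
    have hsub : sp ⊆ sp ∪ sq := Finset.subset_union_left
    have hle : ∑ i ∈ sp, M (|S J i| / (C + 1)) ≤ ∑ i ∈ sp ∪ sq, M (|S J i| / (C + 1)) :=
      Finset.sum_le_sum_of_subset_of_nonneg hsub fun i _ _ =>
        orlicz_nonneg h0 hpos (by positivity)
    calc (1 : ℝ) < (J : ℝ) * M (1 / (C + 1)) := hJM
      _ = ∑ i ∈ sp, M (|S J i| / (C + 1)) := hsum_sp.symm
      _ ≤ _ := hle
  have hlow : C + 1 ≤ hMNorm M (S J) :=
    le_hMNorm hconv hmono h0 hpos (sp ∪ sq) (hSsupp J) hC1pos hmain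
  have hTXnorm : ‖T (S J)‖ ≤ B + 2 := by
    rw [← ZeroAtInftyContinuousMap.norm_toBCF_eq_norm]
    apply (BoundedContinuousFunction.norm_le (by linarith)).2
    intro i
    have hcoe : (T (S J)).toBCF i = (T (S J)) i := rfl
    rw [Real.norm_eq_abs, hcoe]
    have hcoesum : ∀ s : Finset ℕ, ((∑ m ∈ s, T (u (j m)) : C₀(ℕ, ℝ))) i = ∑ m ∈ s, (T (u (j m))) i := by
      intro s
      induction s using Finset.induction_on with
      | empty => simp
      | @insert x s hx ih => rw [Finset.sum_insert hx, Finset.sum_insert hx, ← ih]; simp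
    have heq : (T (S J)) i = ∑ m ∈ Finset.range J, (T (u (j m))) i := by
      rw [hTsum J, hcoesum]
    rw [heq]
    calc |∑ m ∈ Finset.range J, (T (u (j m))) i| ≤ ∑ m ∈ Finset.range J, |(T (u (j m))) i| :=
          Finset.abs_sum_le_sum_abs _ _
      _ ≤ B + 2 := hclaim i J
  have hlower := (hbd (S J) (hSmem J)).1
  have h1 : a * (C + 1) ≤ a * hMNorm M (S J) := mul_le_mul_of_nonneg_left hlow ha.le
  have h2 : a * C = B + 2 := by
    rw [hC, mul_div_cancel₀]
    exact ha.ne'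
  nlinarith
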